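/- In the simple voting environment with at least two voters and at least two candidates, where each voter's admissible preference domain is the set of all complete, transitive, reflexive preference orderings on A_i × Z, every mechanism f satisfying unanimity and monotonicity suffers from Brexit Anomaly. -/

import Mathlib

/-- A complete, transitive, reflexive preference ordering on `α`. -/
structure Pref (α : Type*) where
  rel : α → α → Prop
  total : ∀ x y, rel x y ∨ rel y x
  trans : ∀ x y z, rel x y → rel y z → rel x z
  refl : ∀ x, rel x x

/-- Strict preference derived from a preference ordering. -/
def StrictPref {α : Type*} (P : Pref α) (x y : α) : Prop := P.rel x y ∧ ¬ P.rel y x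

/-- An action in simple voting: `none` is abstention, `some z` is a vote for candidate `z`. -/
abbrev VoteAction (m : ℕ) := Option (Fin m)

/-- Brexit Anomaly in the simple voting environment, with the unrestricted domain of
complete, transitive, reflexive preference orderings. -/
def VoteBA (n m : ℕ) (f : (Fin n → VoteAction m) → Fin m) : Prop :=
  ∃ (i : Fin n) (r ℓ : VoteAction m) (a b : Fin n → VoteAction m)
    (P : Pref (VoteAction m × Fin m)),
    r ≠ ℓ ∧ (∃ j, j ≠ i ∧ a j ≠ b j) ∧
    f (Function.update a i r) = f (Function.update a i ℓ) ∧
    StrictPref P (ℓ, f (Function.update a i ℓ)) (r, f (Function.update a i r)) ∧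
    ∀ x : VoteAction m, P.rel (r, f (Function.update b i r)) (x, f (Function.update b i x))

/-- Key lemma: a collision at `a` for voter `i` together with a profile `b` (differing from
`a` away from `i`) where `r` yields a different outcome produces the Brexit anomaly. -/
lemma voteBA_of_collision {n m : ℕ} (f : (Fin n → VoteAction m) → Fin m)
    (i : Fin n) (r ℓ : VoteAction m) (a b : Fin n → VoteAction m)
    (hrl : r ≠ ℓ)
    (hj : ∃ j, j ≠ i ∧ a j ≠ b j)
    (heq : f (Function.update a i r) = f (Function.update a i ℓ))
    (hb : f (Function.update b i r) ≠ f (Function.update a i r)) :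
    VoteBA n m f := by
  classical
  set c := f (Function.update a i r) with hc
  set d := f (Function.update b i r) with hd
  let u : VoteAction m × Fin m → ℕ := fun p =>
    if p = (r, d) then 2 else if p = (ℓ, c) then 1 else 0
  have hu2 : ∀ p, u p ≤ 2 := by
    intro p; simp only [u]; split <;> [omega; skip]; split <;> omega
  refine ⟨i, r, ℓ, a, b,
    ⟨fun x y => u y ≤ u x, fun x y => le_total (u y) (u x),
      fun x y z h1 h2 => le_trans h2 h1, fun x => le_refl _⟩,
    hrl, hj, heq, ?_, ?_⟩
  · constructor
    · show u (r, f (Function.update a i r)) ≤ u (ℓ, f (Function.update a i ℓ))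
      rw [← heq, ← hc]
      have h1 : u (ℓ, c) = 1 := by
        simp only [u]
        rw [if_neg (by simp [Ne.symm hrl])]; simp
      have h0 : u (r, c) = 0 := by
        simp only [u]
        rw [if_neg (by simp [Ne.symm hb]), if_neg (by simp [hrl])]
      omega
    · show ¬ u (ℓ, f (Function.update a i ℓ)) ≤ u (r, f (Function.update a i r))
      rw [← heq, ← hc]
      have h1 : u (ℓ, c) = 1 := by
        simp only [u]
        rw [if_neg (by simp [Ne.symm hrl])]; simp
      have h0 : u (r, c) = 0 := by
        simp only [u]
        rw [if_neg (by simp [Ne.symm hb]), if_neg (by simp [hrl])]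
      omega
  · intro x
    show u (x, f (Function.update b i x)) ≤ u (r, f (Function.update b i r))
    have : u (r, d) = 2 := by simp [u]
    rw [← hd, this]
    exact hu2 _

/-- Proposition 2: with at least two voters and two candidates, every mechanism satisfying
unanimity and monotonicity suffers from Brexit Anomaly. -/
theorem voting_brexit_anomaly (n m : ℕ) (hn : 2 ≤ n) (hm : 2 ≤ m)
    (f : (Fin n → VoteAction m) → Fin m)
    (unanimity : ∀ z : Fin m, f (fun _ => some z) = z)
    (monotonicity : ∀ (i : Fin n) (a : Fin n → VoteAction m) (z : Fin m),
      f a = z → f (Function.update a i (some z)) = z) :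
    VoteBA n m f := by
  classical
  set i : Fin n := ⟨0, by omega⟩ with hi
  set j : Fin n := ⟨1, by omega⟩ with hjdef
  have hij : i ≠ j := by simp [hi, hjdef, Fin.ext_iff]
  set z0 : Fin m := ⟨0, by omega⟩ with hz0
  set z1 : Fin m := ⟨1, by omega⟩ with hz1
  have hz01 : z0 ≠ z1 := by simp [hz0, hz1, Fin.ext_iff]
  -- helper for the two symmetric cases
  have main : ∀ z : Fin m, f (Function.update (fun _ => some z) i none) ≠ z →
      VoteBA n m f := by
    intro z hcz
    set a : Fin n → VoteAction m := Function.update (fun _ => some z) i none with ha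
    set c : Fin m := f a with hcdef
    -- voter j, pair (some z, some c), b = all vote z
    have haj : a j = some z := by
      rw [ha, Function.update_of_ne (Ne.symm hij)]
    have h1 : f (Function.update a j (some z)) = c := by
      rw [← haj, Function.update_eq_self]
    have h2 : f (Function.update a j (some c)) = c :=
      monotonicity j a c rfl
    have h3 : f (Function.update (fun _ => some z) j (some z)) = z := by
      rw [show Function.update (fun (_ : Fin n) => some z) j (some z)
            = (fun _ => some z) from Function.update_eq_self _ _]
      exact unanimity z
    refine voteBA_of_collision f j (some z) (some c) a (fun _ => some z)
      ?_ ⟨i, hij, ?_⟩ (by rw [h1, h2]) ?_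
    · exact fun h => hcz (by rw [Option.some.inj h])
    · rw [ha, Function.update_self]; exact (Option.some_ne_none z).symm
    · rw [h3, h1]; intro h; exact hcz (h ▸ rfl)
  by_cases hc : f (Function.update (fun _ => some z0) i none) = z0
  · by_cases hd : f (Function.update (fun _ => some z1) i none) = z1
    · -- voter i, a = all z0, pair (none, some z0), b = all z1
      have h2 : f (Function.update (fun _ => some z0) i (some z0)) = z0 := by
        rw [show Function.update (fun (_ : Fin n) => some z0) i (some z0)
              = (fun _ => some z0) from Function.update_eq_self _ _]
        exact unanimity z0
      refine voteBA_of_collision f i none (some z0) (fun _ => some z0) (fun _ => some z1)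
        (by simp) ⟨j, Ne.symm hij, by simp [hz01]⟩ (by rw [hc, h2]) ?_
      rw [hd, hc]; exact hz01.symm
    · exact main z1 hd
  · exact main z0 hc
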